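/- The three sequences V₁(n) = ⌊nφ⌋, V₂(n) = 2⌊nφ⌋ + n − 1, and V₃(n) = 3⌊nφ⌋ + 2n, each for n ≥ 1, form a complementary triple: their value sets are pairwise disjoint and their union is the set of all positive integers. -/

import Mathlib

noncomputable def phi : ℝ := (1 + Real.sqrt 5) / 2

/-- Three sequences (indexed by `n ≥ 1`) form a complementary triple if their value sets
are pairwise disjoint and their union is the set of positive integers. -/
def ComplementaryTriple (V₁ V₂ V₃ : ℕ → ℤ) : Prop :=
  Disjoint {z : ℤ | ∃ n : ℕ, 1 ≤ n ∧ V₁ n = z} {z : ℤ | ∃ n : ℕ, 1 ≤ n ∧ V₂ n = z} ∧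
  Disjoint {z : ℤ | ∃ n : ℕ, 1 ≤ n ∧ V₁ n = z} {z : ℤ | ∃ n : ℕ, 1 ≤ n ∧ V₃ n = z} ∧
  Disjoint {z : ℤ | ∃ n : ℕ, 1 ≤ n ∧ V₂ n = z} {z : ℤ | ∃ n : ℕ, 1 ≤ n ∧ V₃ n = z} ∧
  {z : ℤ | ∃ n : ℕ, 1 ≤ n ∧ V₁ n = z} ∪ {z : ℤ | ∃ n : ℕ, 1 ≤ n ∧ V₂ n = z} ∪
    {z : ℤ | ∃ n : ℕ, 1 ≤ n ∧ V₃ n = z} = {z : ℤ | 0 < z}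

/-! Auxiliary facts about `phi`. -/

lemma CT.sqrt5_sq : Real.sqrt 5 ^ 2 = 5 := Real.sq_sqrt (by norm_num)

lemma CT.phi_gt_one : 1 < phi := by
  have h : (2 : ℝ) < Real.sqrt 5 := by
    nlinarith [CT.sqrt5_sq, Real.sqrt_nonneg 5]
  unfold phi; linarith

lemma CT.phi_lt_two : phi < 2 := by
  have h : Real.sqrt 5 < 3 := by
    nlinarith [CT.sqrt5_sq, Real.sqrt_nonneg 5]
  unfold phi; linarith

lemma CT.phi_sq : phi ^ 2 = phi + 1 := by
  unfold phi; nlinarith [CT.sqrt5_sq]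

open scoped symmDiff

lemma CT.phi_irr : Irrational phi := by
  have h5 : Irrational (Real.sqrt 5) := by
    have : Nat.Prime 5 := by norm_num
    simpa using this.irrational_sqrt
  have h2 : Irrational ((((1 : ℚ) : ℝ) + Real.sqrt 5) / ((2 : ℤ) : ℝ)) :=
    (h5.ratCast_add 1).div_intCast (m := 2) (by norm_num)
  have heq : phi = (((1 : ℚ) : ℝ) + Real.sqrt 5) / ((2 : ℤ) : ℝ) := by
    unfold phi; norm_num
  rw [heq]; exact h2

namespace CT

/-- fractional part of `k*φ` is positive for `k ≠ 0`. -/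
lemma fract_pos {k : ℤ} (hk : k ≠ 0) : 0 < Int.fract ((k : ℝ) * phi) := by
  rcases (Int.fract_nonneg ((k : ℝ) * phi)).lt_or_eq with h | h
  · exact h
  · exfalso
    have hirr : Irrational ((k : ℝ) * phi) := phi_irr.intCast_mul hk
    have : ((k : ℝ) * phi) = (⌊(k : ℝ) * phi⌋ : ℝ) := by
      have := Int.self_sub_fract ((k : ℝ) * phi)
      rw [← h] at this; linarith
    exact hirr.ne_int _ this

/-- Key identity 1: `⌊⌊kφ⌋ φ⌋ = ⌊kφ⌋ + k - 1` for `k > 0`. -/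
lemma floor_A (k : ℤ) (hk : 0 < k) :
    ⌊(⌊(k : ℝ) * phi⌋ : ℝ) * phi⌋ = ⌊(k : ℝ) * phi⌋ + k - 1 := by
  set a : ℤ := ⌊(k : ℝ) * phi⌋ with ha
  set f : ℝ := Int.fract ((k : ℝ) * phi) with hf
  have hf0 : 0 < f := fract_pos hk.ne'
  have hf1 : f < 1 := Int.fract_lt_one _
  have haf : (a : ℝ) = (k : ℝ) * phi - f := by
    rw [ha, hf, ← Int.self_sub_fract]
  have hap : (a : ℝ) * phi = (k : ℝ) * phi + (k : ℝ) - f * phi := by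
    rw [haf, show ((k:ℝ)*phi - f)*phi = (k:ℝ)*phi^2 - f*phi by ring, phi_sq]; ring
  have hA1 : f * (phi - 1) < 1 := by nlinarith [phi_gt_one, phi_lt_two]
  have hA2 : 0 < f * (phi - 1) := mul_pos hf0 (by linarith [phi_gt_one])
  rw [Int.floor_eq_iff]
  constructor
  · push_cast
    nlinarith [hap, haf, hA1, hA2]
  · push_cast
    nlinarith [hap, haf, hA1, hA2]

/-- Key identity 2: `⌊(k + ⌊kφ⌋) φ⌋ = 2⌊kφ⌋ + k` for `k > 0`. -/
lemma floor_B (k : ℤ) (hk : 0 < k) :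
    ⌊((k + ⌊(k : ℝ) * phi⌋ : ℤ) : ℝ) * phi⌋ = 2 * ⌊(k : ℝ) * phi⌋ + k := by
  set a : ℤ := ⌊(k : ℝ) * phi⌋ with ha
  set f : ℝ := Int.fract ((k : ℝ) * phi) with hf
  have hf0 : 0 < f := fract_pos hk.ne'
  have hf1 : f < 1 := Int.fract_lt_one _
  have haf : (a : ℝ) = (k : ℝ) * phi - f := by
    rw [ha, hf, ← Int.self_sub_fract]
  have hap : (a : ℝ) * phi = (k : ℝ) * phi + (k : ℝ) - f * phi := by
    rw [haf, show ((k:ℝ)*phi - f)*phi = (k:ℝ)*phi^2 - f*phi by ring, phi_sq]; ring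
  have hB1 : f * (2 - phi) < 1 := by nlinarith [phi_gt_one, phi_lt_two]
  have hB2 : 0 < f * (2 - phi) := mul_pos hf0 (by linarith [phi_lt_two])
  rw [Int.floor_eq_iff]
  constructor
  · push_cast
    nlinarith [hap, haf, hB1, hB2]
  · push_cast
    nlinarith [hap, haf, hB1, hB2]

/-- The map `g m = m + ⌊mφ⌋`, i.e. `⌊m φ²⌋`. -/
noncomputable def g (m : ℤ) : ℤ := m + ⌊(m : ℝ) * phi⌋

lemma g_strictMono : StrictMono g := by
  intro m m' h
  have : ⌊(m : ℝ) * phi⌋ ≤ ⌊(m' : ℝ) * phi⌋ := by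
    apply Int.floor_le_floor
    have : (m : ℝ) ≤ (m' : ℝ) := by exact_mod_cast h.le
    nlinarith [phi_gt_one]
  unfold g; omega

lemma g_inj : Function.Injective g := g_strictMono.injective

noncomputable def SA : Set ℤ := {z | ∃ k : ℤ, 0 < k ∧ ⌊(k : ℝ) * phi⌋ = z}
noncomputable def SB : Set ℤ := g '' {k : ℤ | 0 < k}

lemma floor_pos_of_pos {k : ℤ} (hk : 0 < k) : 0 < ⌊(k : ℝ) * phi⌋ := by
  rw [Int.floor_pos]
  have : (1 : ℝ) ≤ (k : ℝ) := by exact_mod_cast hk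
  nlinarith [phi_gt_one]

lemma SA_pos : SA ⊆ {z : ℤ | 0 < z} := by
  rintro z ⟨k, hk, rfl⟩
  exact floor_pos_of_pos hk

lemma SB_pos : SB ⊆ {z : ℤ | 0 < z} := by
  rintro z ⟨k, hk, rfl⟩
  have := floor_pos_of_pos hk
  simp only [Set.mem_setOf_eq] at hk ⊢
  unfold g; omega

lemma conj : phi.HolderConjugate (phi + 1) := by
  rw [Real.holderConjugate_iff]
  constructor
  · exact phi_gt_one
  · have h1 : phi ≠ 0 := by linarith [phi_gt_one]
    have h2 : phi + 1 ≠ 0 := by linarith [phi_gt_one]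
    field_simp
    nlinarith [phi_sq]

lemma rayleigh : SA ∆ SB = {z : ℤ | 0 < z} := by
  have h := phi_irr.beattySeq_symmDiff_beattySeq_pos conj
  have hA : {x | ∃ k > 0, beattySeq phi k = x} = SA := by
    ext z
    simp only [Set.mem_setOf_eq, beattySeq, SA, gt_iff_lt]
  have hB : {x | ∃ k > 0, beattySeq (phi + 1) k = x} = SB := by
    ext z
    simp only [Set.mem_setOf_eq, beattySeq, SB, Set.mem_image, gt_iff_lt]
    constructor
    · rintro ⟨k, hk, rfl⟩
      refine ⟨k, hk, ?_⟩
      unfold g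
      rw [mul_add, mul_one]
      rw [show ((k : ℝ) * phi + (k : ℝ)) = ((k : ℝ) * phi + (k : ℤ)) by push_cast; ring,
        Int.floor_add_intCast]
      ring
    · rintro ⟨k, hk, rfl⟩
      refine ⟨k, hk, ?_⟩
      unfold g
      rw [mul_add, mul_one]
      rw [show ((k : ℝ) * phi + (k : ℝ)) = ((k : ℝ) * phi + (k : ℤ)) by push_cast; ring,
        Int.floor_add_intCast]
      ring
  rw [hA, hB] at h
  exact h

lemma disjAB : Disjoint SA SB := by
  rw [Set.disjoint_left]
  intro z hzA hzB
  have hz : z ∈ SA ∆ SB := by rw [rayleigh]; exact SA_pos hzA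
  rw [Set.mem_symmDiff] at hz
  tauto

lemma unionAB : SA ∪ SB = {z : ℤ | 0 < z} := by
  apply Set.eq_of_subset_of_subset
  · exact Set.union_subset SA_pos SB_pos
  · intro z hz
    rw [← rayleigh] at hz
    rw [Set.mem_symmDiff] at hz
    rcases hz with ⟨h, -⟩ | ⟨h, -⟩
    · exact Or.inl h
    · exact Or.inr h

lemma gSB_eq : g '' SA ∪ g '' SB = SB := by
  rw [← Set.image_union, unionAB]
  rfl

/-- value of `g` on an element of `SA`. -/
lemma g_on_A (k : ℤ) (hk : 0 < k) :
    g ⌊(k : ℝ) * phi⌋ = 2 * ⌊(k : ℝ) * phi⌋ + k - 1 := by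
  unfold g
  rw [floor_A k hk]
  ring

/-- value of `g` on an element of `SB`. -/
lemma g_on_B (k : ℤ) (hk : 0 < k) :
    g (g k) = 3 * ⌊(k : ℝ) * phi⌋ + 2 * k := by
  unfold g
  rw [floor_B k hk]
  ring

end CT

/-- The second classical complementary triple:
`(⌊nφ⌋, 2⌊nφ⌋ + n − 1, 3⌊nφ⌋ + 2n)` for `n ≥ 1`. -/
theorem second_classical_triple :
    ComplementaryTriple
      (fun n => ⌊(n : ℝ) * phi⌋)
      (fun n => 2 * ⌊(n : ℝ) * phi⌋ + n - 1)
      (fun n => 3 * ⌊(n : ℝ) * phi⌋ + 2 * n) := by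
  open CT in
  have E1 : {z : ℤ | ∃ n : ℕ, 1 ≤ n ∧ (fun n : ℕ => ⌊(n : ℝ) * phi⌋) n = z} = SA := by
    ext z
    simp only [Set.mem_setOf_eq, SA]
    constructor
    · rintro ⟨n, hn, rfl⟩
      exact ⟨(n : ℤ), by exact_mod_cast hn, by norm_cast⟩
    · rintro ⟨k, hk, rfl⟩
      refine ⟨k.toNat, by omega, ?_⟩
      have hcast : ((k.toNat : ℕ) : ℝ) = (k : ℝ) := by
        rw [← Int.cast_natCast, Int.toNat_of_nonneg hk.le]
      rw [hcast]
  have E2 : {z : ℤ | ∃ n : ℕ, 1 ≤ n ∧ (fun n : ℕ => 2 * ⌊(n : ℝ) * phi⌋ + n - 1) n = z}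
      = CT.g '' SA := by
    ext z
    simp only [Set.mem_setOf_eq, Set.mem_image, SA]
    constructor
    · rintro ⟨n, hn, rfl⟩
      have hk : (0 : ℤ) < (n : ℤ) := by exact_mod_cast hn
      refine ⟨⌊((n : ℤ) : ℝ) * phi⌋, ⟨(n : ℤ), hk, rfl⟩, ?_⟩
      rw [g_on_A _ hk]; push_cast; ring
    · rintro ⟨x, ⟨k, hk, rfl⟩, rfl⟩
      refine ⟨k.toNat, by omega, ?_⟩
      have hcast : ((k.toNat : ℕ) : ℝ) = (k : ℝ) := by
        rw [← Int.cast_natCast, Int.toNat_of_nonneg hk.le]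
      rw [hcast, g_on_A _ hk]
      push_cast
      omega
  have E3 : {z : ℤ | ∃ n : ℕ, 1 ≤ n ∧ (fun n : ℕ => 3 * ⌊(n : ℝ) * phi⌋ + 2 * n) n = z}
      = CT.g '' SB := by
    ext z
    simp only [Set.mem_setOf_eq, Set.mem_image, SB]
    constructor
    · rintro ⟨n, hn, rfl⟩
      have hk : (0 : ℤ) < (n : ℤ) := by exact_mod_cast hn
      refine ⟨g (n : ℤ), ⟨(n : ℤ), hk, rfl⟩, ?_⟩
      rw [g_on_B _ hk]; push_cast; ring
    · rintro ⟨x, ⟨k, hk, rfl⟩, rfl⟩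
      replace hk : 0 < k := hk
      refine ⟨k.toNat, by omega, ?_⟩
      have hcast : ((k.toNat : ℕ) : ℝ) = (k : ℝ) := by
        rw [← Int.cast_natCast, Int.toNat_of_nonneg hk.le]
      rw [hcast, g_on_B _ hk]
      push_cast
      omega
  have hgA_sub : CT.g '' SA ⊆ SB := by
    rw [← gSB_eq]; exact Set.subset_union_left
  have hgB_sub : CT.g '' SB ⊆ SB := by
    conv_rhs => rw [← gSB_eq]
    exact Set.subset_union_right
  refine ⟨?_, ?_, ?_, ?_⟩
  · rw [E1, E2]
    exact disjAB.mono_right hgA_sub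
  · rw [E1, E3]
    exact disjAB.mono_right hgB_sub
  · rw [E2, E3]
    rw [Set.disjoint_left]
    rintro z ⟨a, haA, rfl⟩ ⟨b, hbB, hba⟩
    have : b = a := g_inj hba
    subst this
    exact Set.disjoint_left.mp disjAB haA hbB
  · rw [E1, E2, E3, Set.union_assoc, gSB_eq, unionAB]
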